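/- arXiv:math/0702846 — 3 statements merged into one kernel-verified Lean document; each statement's English description precedes it below -/
import Mathlib

section
/- Let K be a differential field with derivation ∂, let A be a differential Hopf algebra over K, and let V be a finite-dimensional differential A-comodule with basis v_1,…,v_n and ρ(v_j) = Σ_i v_i ⊗ a_{ij}. Define V^{(1)} = K[∂]_{≤1} ⊗ V (a K-space with basis v_1,…,v_n, ∂v_1,…,∂v_n) and ρ^{(1)}(v_j) = Σ_i v_i ⊗ a_{ij}, ρ^{(1)}(∂v_j) = Σ_i (∂v_i ⊗ a_{ij} + v_i ⊗ ∂a_{ij}). Then ρ^{(1)} : V^{(1)} → V^{(1)} ⊗ A is an A-comodule structure on V^{(1)}. -/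
open TensorProduct

/-- The coaction on `ι → K` associated to a matrix `c : ι → ι → A` of coefficients:
the basis vector `e q` is sent to `∑ p, e p ⊗ c p q`. -/
noncomputable def matCoact (K A : Type*) [Field K] [CommRing A] [Algebra K A]
    {ι : Type*} [Fintype ι] [DecidableEq ι] (c : ι → ι → A) :
    (ι → K) →ₗ[K] (ι → K) ⊗[K] A :=
  ∑ p, ∑ q, (TensorProduct.mk K (ι → K) A (Pi.single p 1)).comp
    ((LinearMap.proj q).smulRight (c p q))

/-- The block matrix of the prolonged coaction `ρ^{(1)}` on `V^{(1)}`: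
in the ordered basis `v_1, …, v_n, ∂v_1, …, ∂v_n` it is `[[a, ∂a],[0, a]]`. -/
def prolongMat {A ι : Type*} [CommRing A] (dA : A → A) (a : ι → ι → A) :
    (ι ⊕ ι) → (ι ⊕ ι) → A
  | Sum.inl i, Sum.inl j => a i j
  | Sum.inl i, Sum.inr j => dA (a i j)
  | Sum.inr _, Sum.inl _ => 0
  | Sum.inr i, Sum.inr j => a i j

lemma matCoact_single (K A : Type*) [Field K] [CommRing A] [Algebra K A]
    {ι : Type*} [Fintype ι] [DecidableEq ι] (c : ι → ι → A) (q : ι) :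
    matCoact K A c (Pi.single q 1) = ∑ p, Pi.single p (1 : K) ⊗ₜ[K] c p q := by
  unfold matCoact
  simp only [LinearMap.sum_apply, LinearMap.comp_apply, LinearMap.smulRight_apply,
    LinearMap.proj_apply, TensorProduct.mk_apply, Pi.single_apply]
  refine Finset.sum_congr rfl fun p _ => ?_
  rw [Finset.sum_eq_single q]
  · simp
  · intro r _ hr
    simp [hr]
  · simp

section Gen
variable {K A : Type*} [Field K] [CommRing A] [HopfAlgebra K A]
  {ι : Type*} [Fintype ι] [DecidableEq ι] (c : ι → ι → A)

set_option maxHeartbeats 1000000 in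
set_option synthInstance.maxHeartbeats 400000 in
lemma matCoact_coassoc
    (hΔ' : ∀ p q, Coalgebra.comul (R := K) (c p q) = ∑ r, c p r ⊗ₜ[K] c r q) :
    ((TensorProduct.assoc K (ι → K) A A).toLinearMap ∘ₗ
        (TensorProduct.map (matCoact K A c) LinearMap.id) ∘ₗ matCoact K A c) =
      (TensorProduct.map LinearMap.id (Coalgebra.comul (R := K))) ∘ₗ matCoact K A c := by
  refine Module.Basis.ext (Pi.basisFun K ι) fun q => ?_
  simp only [LinearMap.comp_apply, Pi.basisFun_apply, matCoact_single, map_sum,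
    TensorProduct.map_tmul, LinearMap.id_apply, hΔ', LinearEquiv.coe_coe]
  simp only [matCoact_single, TensorProduct.sum_tmul, map_sum, TensorProduct.assoc_tmul,
    TensorProduct.tmul_sum]
  exact Finset.sum_comm

lemma matCoact_counit
    (hε' : ∀ p q, Coalgebra.counit (R := K) (c p q) = if p = q then (1 : K) else 0)
    (v : ι → K) :
    (TensorProduct.rid K (ι → K))
        ((TensorProduct.map LinearMap.id (Coalgebra.counit (R := K)))
          (matCoact K A c v)) = v := by
  have h : ((TensorProduct.rid K (ι → K)).toLinearMap ∘ₗ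
      (TensorProduct.map LinearMap.id (Coalgebra.counit (R := K))) ∘ₗ matCoact K A c)
      = LinearMap.id := by
    refine Module.Basis.ext (Pi.basisFun K ι) fun q => ?_
    simp only [LinearMap.comp_apply, Pi.basisFun_apply, matCoact_single, map_sum,
      TensorProduct.map_tmul, LinearMap.id_apply, hε', LinearEquiv.coe_coe,
      TensorProduct.rid_tmul]
    rw [Finset.sum_eq_single q] <;> simp_all
  exact congrArg (fun f => f v) h

end Gen

/-- Prolongation of a differential comodule: if `ρ(v_j) = ∑ v_i ⊗ a i j` is an
`A`-comodule structure, then `ρ^{(1)}(v_j) = ∑ v_i ⊗ a i j`,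
`ρ^{(1)}(∂v_j) = ∑ (∂v_i ⊗ a i j + v_i ⊗ ∂a i j)` is an `A`-comodule structure on
`V^{(1)}`, i.e. it is coassociative and counital. -/
theorem stmt_4 {K A : Type*} [Field K] [CharZero K] [CommRing A] [HopfAlgebra K A]
    (dK : K → K)
    (hKadd : ∀ x y : K, dK (x + y) = dK x + dK y)
    (hKmul : ∀ x y : K, dK (x * y) = dK x * y + x * dK y)
    (dA : A → A)
    (hAadd : ∀ x y : A, dA (x + y) = dA x + dA y)
    (hAmul : ∀ x y : A, dA (x * y) = dA x * y + x * dA y)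
    (hAalg : ∀ k : K, dA (algebraMap K A k) = algebraMap K A (dK k))
    (dT : A ⊗[K] A → A ⊗[K] A)
    (hTadd : ∀ x y : A ⊗[K] A, dT (x + y) = dT x + dT y)
    (hTpure : ∀ x y : A, dT (x ⊗ₜ[K] y) = dA x ⊗ₜ[K] y + x ⊗ₜ[K] dA y)
    (hΔd : ∀ x : A, Coalgebra.comul (R := K) (dA x) = dT (Coalgebra.comul (R := K) x))
    (hεd : ∀ x : A, Coalgebra.counit (R := K) (dA x) = dK (Coalgebra.counit (R := K) x))
    (n : ℕ) (a : Fin n → Fin n → A)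
    (hΔ : ∀ i j, Coalgebra.comul (R := K) (a i j) = ∑ r, a i r ⊗ₜ[K] a r j)
    (hε : ∀ i j, Coalgebra.counit (R := K) (a i j) = if i = j then (1 : K) else 0) :
    ((TensorProduct.assoc K (Fin n ⊕ Fin n → K) A A).toLinearMap ∘ₗ
        (TensorProduct.map (matCoact K A (prolongMat dA a)) LinearMap.id) ∘ₗ
          matCoact K A (prolongMat dA a) =
      (TensorProduct.map LinearMap.id (Coalgebra.comul (R := K))) ∘ₗ
        matCoact K A (prolongMat dA a)) ∧
    ∀ v : Fin n ⊕ Fin n → K,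
      (TensorProduct.rid K (Fin n ⊕ Fin n → K))
        ((TensorProduct.map LinearMap.id (Coalgebra.counit (R := K)))
          (matCoact K A (prolongMat dA a) v)) = v := by
  -- dT as an additive monoid hom, to push through sums
  let D : A ⊗[K] A →+ A ⊗[K] A := AddMonoidHom.mk' dT hTadd
  have hdK1 : dK 1 = 0 := by
    have h := hKmul 1 1
    simp only [one_mul, mul_one, left_eq_add, right_eq_add] at h
    exact h
  have hdK0 : dK 0 = 0 := by
    have h := hKadd 0 0
    simp only [add_zero, left_eq_add, right_eq_add] at h
    exact h
  have hΔ' : ∀ p q, Coalgebra.comul (R := K) (prolongMat dA a p q) =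
      ∑ r, prolongMat dA a p r ⊗ₜ[K] prolongMat dA a r q := by
    rintro (i | i) (j | j) <;>
      simp only [prolongMat, Fintype.sum_sum_type]
    · simp [hΔ i j, TensorProduct.zero_tmul, TensorProduct.tmul_zero]
    · rw [hΔd, hΔ i j]
      have : dT (∑ r, a i r ⊗ₜ[K] a r j) = ∑ r, dT (a i r ⊗ₜ[K] a r j) :=
        map_sum D _ _
      rw [this]
      simp only [hTpure]
      rw [Finset.sum_add_distrib, add_comm]
    · simp
    · simp [hΔ i j, TensorProduct.zero_tmul, TensorProduct.tmul_zero]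
  have hε' : ∀ p q, Coalgebra.counit (R := K) (prolongMat dA a p q) =
      if p = q then (1 : K) else 0 := by
    rintro (i | i) (j | j) <;> simp only [prolongMat]
    · rw [hε i j]; simp [Sum.inl.injEq]
    · rw [hεd, hε i j]
      by_cases h : i = j <;> simp [h, hdK1, hdK0]
    · simp
    · rw [hε i j]; simp [Sum.inr.injEq]
  exact ⟨matCoact_coassoc _ hΔ', matCoact_counit _ hε'⟩
end

section
/- Let B be the matrix of a representation of a differential algebraic group G on an n-dimensional space V, i.e., Δ(b_{ij}) = Σ_l b_{il} ⊗ b_{lj} in a differential Hopf algebra A, with entries b_{ij} ∈ A. For a fixed i ≥ 0, define the block lower-triangular (i+1)n × (i+1)n matrix B_i whose (m,r) block (0 ≤ r ≤ m ≤ i) is C(i-r, m-r)·∂^{m-r}(B) in a suitable indexing. Then the entries c_{pq} of B_i again satisfy Δ(c_{pq}) = Σ_s c_{ps} ⊗ c_{sq}; i.e., B_i defines a comodule structure on V^{(i)}. -/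
open TensorProduct Finset

/-- Subset-of-a-subset identity for binomial coefficients. -/
private lemma trinom_choose {n k j : ℕ} (hj : j ≤ k) (hk : k ≤ n) :
    n.choose k * k.choose j = n.choose j * (n - j).choose (k - j) := by
  have hjn : j ≤ n := hj.trans hk
  have h1 : 0 < Nat.factorial j * (Nat.factorial (k - j) * Nat.factorial (n - k)) :=
    Nat.mul_pos (Nat.factorial_pos _) (Nat.mul_pos (Nat.factorial_pos _) (Nat.factorial_pos _))
  apply Nat.eq_of_mul_eq_mul_right h1
  have L : n.choose k * k.choose j * (Nat.factorial j * (Nat.factorial (k - j) * Nat.factorial (n - k))) = Nat.factorial n := by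
    calc n.choose k * k.choose j * (Nat.factorial j * (Nat.factorial (k - j) * Nat.factorial (n - k)))
        = (k.choose j * Nat.factorial j * Nat.factorial (k - j)) * n.choose k * Nat.factorial (n - k) := by ring
      _ = Nat.factorial k * n.choose k * Nat.factorial (n - k) := by rw [Nat.choose_mul_factorial_mul_factorial hj]
      _ = n.choose k * Nat.factorial k * Nat.factorial (n - k) := by ring
      _ = Nat.factorial n := Nat.choose_mul_factorial_mul_factorial hk
  have hnk : n - j - (k - j) = n - k := by omega
  have R : n.choose j * (n - j).choose (k - j) * (Nat.factorial j * (Nat.factorial (k - j) * Nat.factorial (n - k))) = Nat.factorial n := by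
    calc n.choose j * (n - j).choose (k - j) * (Nat.factorial j * (Nat.factorial (k - j) * Nat.factorial (n - k)))
        = ((n - j).choose (k - j) * Nat.factorial (k - j) * Nat.factorial (n - k)) * n.choose j * Nat.factorial j := by ring
      _ = ((n - j).choose (k - j) * Nat.factorial (k - j) * Nat.factorial (n - j - (k - j))) * n.choose j * Nat.factorial j := by
          rw [hnk]
      _ = Nat.factorial (n - j) * n.choose j * Nat.factorial j := by
          rw [Nat.choose_mul_factorial_mul_factorial (by omega : k - j ≤ n - j)]
      _ = n.choose j * Nat.factorial j * Nat.factorial (n - j) := by ring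
      _ = Nat.factorial n := Nat.choose_mul_factorial_mul_factorial hjn
  rw [L, R]

/-- If `b` is the matrix of a representation of a differential algebraic group
(`Δ(b p q) = ∑ l, b p l ⊗ b l q` in a differential Hopf algebra `A`), then for fixed
`i ≥ 0` the block lower-triangular matrix `c` whose `(m,r)` block (for `r ≤ m ≤ i`) is
`C(i-r, m-r) • ∂^{m-r}(b)` again satisfies `Δ(c P Q) = ∑ S, c P S ⊗ c S Q`, i.e. it
defines a comodule structure on `V^{(i)}`. -/
theorem stmt_5 {K A : Type*} [Field K] [CharZero K] [CommRing A] [HopfAlgebra K A]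
    (d : A → A)
    (hadd : ∀ x y : A, d (x + y) = d x + d y)
    (hmul : ∀ x y : A, d (x * y) = d x * y + x * d y)
    (dT : A ⊗[K] A → A ⊗[K] A)
    (hTadd : ∀ x y : A ⊗[K] A, dT (x + y) = dT x + dT y)
    (hTpure : ∀ x y : A, dT (x ⊗ₜ[K] y) = d x ⊗ₜ[K] y + x ⊗ₜ[K] d y)
    (hΔd : ∀ x : A, Coalgebra.comul (R := K) (d x) = dT (Coalgebra.comul (R := K) x))
    (n : ℕ) (b : Fin n → Fin n → A)
    (hb : ∀ p q, Coalgebra.comul (R := K) (b p q) = ∑ l, b p l ⊗ₜ[K] b l q)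
    (i : ℕ)
    (c : Fin (i + 1) × Fin n → Fin (i + 1) × Fin n → A)
    (hc : ∀ (m r : Fin (i + 1)) (p q : Fin n),
      c (m, p) (r, q) =
        if (r : ℕ) ≤ (m : ℕ) then
          ((i - (r : ℕ)).choose ((m : ℕ) - (r : ℕ))) • d^[(m : ℕ) - (r : ℕ)] (b p q)
        else 0) :
    ∀ P Q, Coalgebra.comul (R := K) (c P Q) = ∑ S, c P S ⊗ₜ[K] c S Q := by
  classical
  -- dT is an additive monoid hom
  set DT : A ⊗[K] A →+ A ⊗[K] A := AddMonoidHom.mk' dT hTadd with hDT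
  have hDTapp : ∀ z, dT z = DT z := fun _ => rfl
  have hTsum : ∀ {ι : Type} (s : Finset ι) (f : ι → A ⊗[K] A),
      dT (∑ t ∈ s, f t) = ∑ t ∈ s, dT (f t) := by
    intro ι s f
    simp only [hDTapp]
    exact map_sum DT f s
  have hTsmul : ∀ (N : ℕ) (z : A ⊗[K] A), dT (N • z) = N • dT z := by
    intro N z
    simp only [hDTapp]
    exact map_nsmul DT N z
  -- iterated comultiplication commutes with iterated derivative
  have hΔiter : ∀ (k : ℕ) (x : A),
      Coalgebra.comul (R := K) (d^[k] x) = dT^[k] (Coalgebra.comul (R := K) x) := by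
    intro k
    induction k with
    | zero => intro x; simp
    | succ k ih =>
      intro x
      rw [Function.iterate_succ_apply', hΔd, ih]
      exact (Function.iterate_succ_apply' dT k _).symm
  -- iterated dT is additive over sums
  have hTitersum : ∀ (k : ℕ) {ι : Type} (s : Finset ι) (f : ι → A ⊗[K] A),
      dT^[k] (∑ t ∈ s, f t) = ∑ t ∈ s, dT^[k] (f t) := by
    intro k
    induction k with
    | zero => intro ι s f; simp
    | succ k ih =>
      intro ι s f
      rw [Function.iterate_succ_apply, hTsum, ih]
      exact Finset.sum_congr rfl fun t _ => (Function.iterate_succ_apply dT k (f t)).symm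
  -- the iterated Leibniz rule on pure tensors
  have hleib : ∀ (k : ℕ) (x y : A),
      dT^[k] (x ⊗ₜ[K] y) =
        ∑ t ∈ range (k + 1), k.choose t • (d^[k - t] x ⊗ₜ[K] d^[t] y) := by
    intro k
    induction k with
    | zero => intro x y; simp
    | succ k IH =>
      intro x y
      calc
        dT^[k + 1] (x ⊗ₜ[K] y) =
            dT (∑ t ∈ range (k + 1), k.choose t • (d^[k - t] x ⊗ₜ[K] d^[t] y)) := by
          rw [Function.iterate_succ_apply', IH]
        _ = (∑ t ∈ range (k + 1), k.choose t • (d^[k - t + 1] x ⊗ₜ[K] d^[t] y)) +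
            ∑ t ∈ range (k + 1), k.choose t • (d^[k - t] x ⊗ₜ[K] d^[t + 1] y) := by
          rw [hTsum]
          simp_rw [hTsmul, hTpure, Function.iterate_succ_apply' d, smul_add,
            sum_add_distrib]
        _ = ((∑ t ∈ range (k + 1), k.choose (t + 1) • (d^[k - t] x ⊗ₜ[K] d^[t + 1] y)) +
              1 • (d^[k + 1] x ⊗ₜ[K] d^[0] y)) +
            ∑ t ∈ range (k + 1), k.choose t • (d^[k - t] x ⊗ₜ[K] d^[t + 1] y) := ?_
        _ = ((∑ t ∈ range (k + 1), k.choose t • (d^[k - t] x ⊗ₜ[K] d^[t + 1] y)) +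
              ∑ t ∈ range (k + 1), k.choose (t + 1) • (d^[k - t] x ⊗ₜ[K] d^[t + 1] y)) +
            1 • (d^[k + 1] x ⊗ₜ[K] d^[0] y) := by
          rw [add_comm]
          abel
        _ = (∑ t ∈ range (k + 1),
              (k + 1).choose (t + 1) • (d^[k + 1 - (t + 1)] x ⊗ₜ[K] d^[t + 1] y)) +
            1 • (d^[k + 1] x ⊗ₜ[K] d^[0] y) := by
          simp_rw [Nat.choose_succ_succ, Nat.succ_sub_succ, add_smul, sum_add_distrib]
        _ = ∑ t ∈ range (k + 1 + 1),
              (k + 1).choose t • (d^[k + 1 - t] x ⊗ₜ[K] d^[t] y) := by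
          rw [sum_range_succ' _ (k + 1), Nat.choose_zero_right, Nat.sub_zero, one_smul]
      congr 1
      refine (sum_range_succ' _ _).trans (congrArg₂ (· + ·) ?_ ?_)
      · rw [sum_range_succ, Nat.choose_succ_self, zero_smul, add_zero]
        refine sum_congr rfl fun t ht => ?_
        rw [mem_range] at ht
        rw [show k - (t + 1) + 1 = k - t from by omega]
      · rw [Nat.choose_zero_right, Nat.sub_zero]
  -- Main computation
  rintro ⟨m, p⟩ ⟨r, q⟩
  have hmi : (m : ℕ) ≤ i := by omega
  rw [hc]
  rw [Fintype.sum_prod_type]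
  by_cases hr : (r : ℕ) ≤ (m : ℕ)
  · rw [if_pos hr]
    set k : ℕ := (m : ℕ) - (r : ℕ) with hk
    set N : ℕ := (i - (r : ℕ)).choose k with hN
    rw [map_nsmul, hΔiter, hb, hTitersum]
    simp_rw [hleib]
    rw [Finset.smul_sum]
    rw [Finset.sum_comm (γ := Fin (i + 1)) (s := Finset.univ) (t := Finset.univ)]
    refine Finset.sum_congr rfl fun l _ => ?_
    -- fix the column l; compare the sums over the derivative order
    have hfin : (∑ s : Fin (i + 1), c (m, p) (s, l) ⊗ₜ[K] c (s, l) (r, q)) =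
        ∑ j ∈ range (i + 1),
          ((if j ≤ (m : ℕ) then (i - j).choose ((m : ℕ) - j) • d^[(m : ℕ) - j] (b p l)
              else 0) ⊗ₜ[K]
           (if (r : ℕ) ≤ j then (i - (r : ℕ)).choose (j - (r : ℕ)) •
              d^[j - (r : ℕ)] (b l q) else 0)) := by
      rw [← Fin.sum_univ_eq_sum_range]
      exact Finset.sum_congr rfl fun s _ => by rw [hc, hc]
    rw [hfin]
    -- restrict the sum to the interval [r, m]
    rw [← Finset.sum_subset (show Finset.Icc (r : ℕ) (m : ℕ) ⊆ range (i + 1) by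
        intro j hj; rw [Finset.mem_Icc] at hj; rw [mem_range]; omega)
      (by
        intro j hj hj'
        rw [Finset.mem_Icc] at hj'
        push_neg at hj'
        by_cases h1 : j ≤ (m : ℕ)
        · rw [if_neg (by omega : ¬ (r : ℕ) ≤ j), tmul_zero]
        · rw [if_neg h1, zero_tmul])]
    -- change variables j = t + r
    rw [Finset.smul_sum]
    simp_rw [smul_smul]
    refine Finset.sum_nbij' (fun t => t + (r : ℕ)) (fun j => j - (r : ℕ)) ?_ ?_ ?_ ?_ ?_
    · intro t ht
      rw [mem_range] at ht
      rw [Finset.mem_Icc]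
      omega
    · intro j hj
      rw [Finset.mem_Icc] at hj
      rw [mem_range]
      omega
    · intro t ht
      omega
    · intro j hj
      rw [Finset.mem_Icc] at hj
      omega
    · intro t ht
      rw [mem_range] at ht
      rw [if_pos (by omega : t + (r : ℕ) ≤ (m : ℕ)),
        if_pos (by omega : (r : ℕ) ≤ t + (r : ℕ)),
        show t + (r : ℕ) - (r : ℕ) = t from by omega,
        show (m : ℕ) - (t + (r : ℕ)) = k - t from by omega,
        show i - (t + (r : ℕ)) = i - (r : ℕ) - t from by omega]
      simp only [smul_tmul', tmul_smul, smul_smul]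
      congr 2
      rw [hN, trinom_choose (by omega : t ≤ k) (by omega : k ≤ i - (r : ℕ))]
  · rw [if_neg hr, map_zero]
    symm
    apply Finset.sum_eq_zero
    intro s _
    apply Finset.sum_eq_zero
    intro l _
    rw [hc, hc]
    by_cases h1 : (s : ℕ) ≤ (m : ℕ)
    · rw [if_neg (by omega : ¬ (r : ℕ) ≤ (s : ℕ)), tmul_zero]
    · rw [if_neg h1, zero_tmul]
end

section
/- Let K be a field and C the category of all pairs (V, nothing) of finite-dimensional K-vector spaces with all K-linear maps as morphisms (i.e., representations of the trivial group). In the quotient space 𝒜 = (⊕_V V⊗V*)/R, where R is spanned by all elements i_V(v ⊗ φ*(t)) − i_W(φ(v) ⊗ t) over linear maps φ : V → W, the following hold: (1) for any nonzero v ∈ V and w ∈ W, the classes of v⊗v* and w⊗w* coincide (for suitable dual vectors with v*(v)=w*(w)=1); (2) for v₁, v₂ linearly independent in V, the class of v₁⊗v₂* is zero; and hence (3) 𝒜 is one-dimensional, spanned by the nonzero class of e⊗e* for the one-dimensional space. -/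
open TensorProduct

set_option maxHeartbeats 1000000
set_option synthInstance.maxHeartbeats 400000

/-- The direct sum `⊕_V V ⊗ V*` over a skeleton of the finite-dimensional `K`-spaces. -/
noncomputable abbrev Fsp (K : Type*) [Field K] :=
  Π₀ n : ℕ, (Fin n → K) ⊗[K] Module.Dual K (Fin n → K)

noncomputable instance Fsp.addCommGroup (K : Type*) [Field K] : AddCommGroup (Fsp K) :=
  { DFinsupp.addCommGroup with toAddCommMonoid := DFinsupp.addCommMonoid }

/-- The canonical injection `i_V : V ⊗ V* → ⊕_W W ⊗ W*`. -/
noncomputable def iV (K : Type*) [Field K] (n : ℕ)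
    (z : (Fin n → K) ⊗[K] Module.Dual K (Fin n → K)) : Fsp K :=
  DFinsupp.lsingle (R := K) (M := fun k => (Fin k → K) ⊗[K] Module.Dual K (Fin k → K)) n z

/-- A generator `i_V((id ⊗ φ*)(z)) − i_W((φ ⊗ id)(z))` of the relation subspace. -/
noncomputable def genR (K : Type*) [Field K] (n m : ℕ)
    (φ : (Fin n → K) →ₗ[K] (Fin m → K))
    (z : (Fin n → K) ⊗[K] Module.Dual K (Fin m → K)) : Fsp K :=
  iV K n (TensorProduct.map LinearMap.id φ.dualMap z) -
    iV K m (TensorProduct.map φ LinearMap.id z)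

/-- The subspace `R` spanned by the elements `i_V((id ⊗ φ*)(z)) − i_W((φ ⊗ id)(z))` over
all linear maps `φ : V → W` and `z ∈ V ⊗ W*`. -/
noncomputable def Rsub (K : Type*) [Field K] : Submodule K (Fsp K) :=
  Submodule.span K
    { x | ∃ (n m : ℕ) (φ : (Fin n → K) →ₗ[K] (Fin m → K))
        (z : (Fin n → K) ⊗[K] Module.Dual K (Fin m → K)), x = genR K n m φ z }

/-- The class `a_V(v ⊗ u)` of `i_V(v ⊗ u)` in the quotient `𝒜 = (⊕_V V⊗V*)/R`. -/
noncomputable def aCl (K : Type*) [Field K] (n : ℕ) (v : Fin n → K)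
    (u : Module.Dual K (Fin n → K)) : Fsp K ⧸ Rsub K :=
  Submodule.Quotient.mk (iV K n (v ⊗ₜ[K] u))

/-- The trace functional on `⊕_V V ⊗ V*`. -/
noncomputable def TrF (K : Type*) [Field K] : Fsp K →ₗ[K] K :=
  DFinsupp.lsum ℕ (fun n => contractRight K (Fin n → K))

lemma TrF_iV (K : Type*) [Field K] (n : ℕ)
    (z : (Fin n → K) ⊗[K] Module.Dual K (Fin n → K)) :
    TrF K (iV K n z) = contractRight K (Fin n → K) z := by
  simp [TrF, iV]

lemma TrF_genR (K : Type*) [Field K] (n m : ℕ)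
    (φ : (Fin n → K) →ₗ[K] (Fin m → K))
    (z : (Fin n → K) ⊗[K] Module.Dual K (Fin m → K)) :
    TrF K (genR K n m φ z) = 0 := by
  have h : ∀ z : (Fin n → K) ⊗[K] Module.Dual K (Fin m → K),
      contractRight K (Fin n → K) (TensorProduct.map LinearMap.id φ.dualMap z)
        = contractRight K (Fin m → K) (TensorProduct.map φ LinearMap.id z) := by
    intro z
    induction z using TensorProduct.induction_on with
    | zero => simp
    | tmul v t => simp [contractRight_apply]
    | add x y hx hy => simp [map_add, hx, hy]
  simp [genR, map_sub, TrF_iV, h]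

lemma Rsub_le_ker (K : Type*) [Field K] : Rsub K ≤ LinearMap.ker (TrF K) := by
  rw [Rsub, Submodule.span_le]
  rintro x ⟨n, m, φ, z, rfl⟩
  simpa [LinearMap.mem_ker] using TrF_genR K n m φ z

lemma aCl_eq_smul (K : Type*) [Field K] (n : ℕ) (v : Fin n → K)
    (u : Module.Dual K (Fin n → K)) :
    aCl K n v u = u v • aCl K 1 (fun _ => 1) (LinearMap.proj 0) := by
  set e : Fin 1 → K := fun _ => 1 with he
  set φ : (Fin 1 → K) →ₗ[K] (Fin n → K) :=
    (LinearMap.proj 0 : (Fin 1 → K) →ₗ[K] K).smulRight v with hφ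
  have hφe : φ e = v := by simp [hφ, he]
  have hdual : φ.dualMap u = u v • (LinearMap.proj 0 : (Fin 1 → K) →ₗ[K] K) := by
    ext x
    simp [hφ, mul_comm]
  have hgen : genR K 1 n φ (e ⊗ₜ[K] u)
      = u v • iV K 1 (e ⊗ₜ[K] (LinearMap.proj 0 : (Fin 1 → K) →ₗ[K] K))
        - iV K n (v ⊗ₜ[K] u) := by
    simp only [genR, TensorProduct.map_tmul, LinearMap.id_coe, id_eq, hφe, hdual,
      TensorProduct.tmul_smul, iV, map_smul]
  have hmem : u v • iV K 1 (e ⊗ₜ[K] (LinearMap.proj 0 : (Fin 1 → K) →ₗ[K] K))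
      - iV K n (v ⊗ₜ[K] u) ∈ Rsub K := by
    rw [← hgen]
    exact Submodule.subset_span ⟨1, n, φ, e ⊗ₜ[K] u, rfl⟩
  have h2 : Submodule.Quotient.mk (p := Rsub K)
      (u v • iV K 1 (e ⊗ₜ[K] (LinearMap.proj 0 : (Fin 1 → K) →ₗ[K] K)))
      = Submodule.Quotient.mk (iV K n (v ⊗ₜ[K] u)) := (Submodule.Quotient.eq _).2 hmem
  rw [aCl, aCl, ← h2, Submodule.Quotient.mk_smul]

lemma aCl_mem_span (K : Type*) [Field K] (y : Fsp K) :
    Submodule.Quotient.mk (p := Rsub K) y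
      ∈ Submodule.span K {aCl K 1 (fun _ => 1) (LinearMap.proj 0)} := by
  have hz : ∀ (n : ℕ) (z : (Fin n → K) ⊗[K] Module.Dual K (Fin n → K)),
      Submodule.Quotient.mk (p := Rsub K) (iV K n z)
        ∈ Submodule.span K {aCl K 1 (fun _ => 1) (LinearMap.proj 0)} := by
    intro n z
    induction z using TensorProduct.induction_on with
    | zero => simp [iV]
    | tmul v u =>
      rw [show Submodule.Quotient.mk (p := Rsub K) (iV K n (v ⊗ₜ[K] u)) = aCl K n v u from rfl,
        aCl_eq_smul K n v u]
      exact Submodule.smul_mem _ (u v)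
        (Submodule.mem_span_singleton_self (aCl K 1 (fun _ => 1) (LinearMap.proj 0)))
    | add x y hx hy =>
      rw [show iV K n (x + y) = iV K n x + iV K n y from map_add _ _ _,
        Submodule.Quotient.mk_add]
      exact add_mem hx hy
  induction y using DFinsupp.induction with
  | h0 => simp
  | ha n z f _ _ ih =>
    rw [Submodule.Quotient.mk_add]
    exact add_mem (hz n z) ih

/-- For the trivial group, the quotient `𝒜 = (⊕_V V⊗V*)/R` satisfies:
(1) the classes of `v⊗v*` and `w⊗w*` coincide for all nonzero `v`, `w` and dual vectors
with `v*(v) = w*(w) = 1`; (2) for `v₁, v₂` linearly independent the class of `v₁ ⊗ v₂*`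
is zero; hence (3) `𝒜` is one-dimensional, spanned by the nonzero class of `e ⊗ e*` for
the one-dimensional space. -/
theorem stmt_15 (K : Type*) [Field K] :
    (∀ (n m : ℕ) (v : Fin n → K) (w : Fin m → K)
        (uv : Module.Dual K (Fin n → K)) (uw : Module.Dual K (Fin m → K)),
      v ≠ 0 → w ≠ 0 → uv v = 1 → uw w = 1 → aCl K n v uv = aCl K m w uw) ∧
    (∀ (n : ℕ) (v₁ v₂ : Fin n → K) (u : Module.Dual K (Fin n → K)),
      LinearIndependent K ![v₁, v₂] → u v₁ = 0 → u v₂ = 1 → aCl K n v₁ u = 0) ∧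
    (aCl K 1 (fun _ => 1) (LinearMap.proj 0) ≠ 0 ∧
      ∀ x : Fsp K ⧸ Rsub K, ∃ c : K, x = c • aCl K 1 (fun _ => 1) (LinearMap.proj 0)) := by
  refine ⟨?_, ?_, ?_, ?_⟩
  · intro n m v w uv uw _ _ huv huw
    rw [aCl_eq_smul K n v uv, aCl_eq_smul K m w uw, huv, huw]
  · intro n v₁ v₂ u _ h0 _
    rw [aCl_eq_smul, h0, zero_smul]
  · intro h
    have hmem : iV K 1 ((fun _ => (1 : K)) ⊗ₜ[K] (LinearMap.proj 0 : (Fin 1 → K) →ₗ[K] K))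
        ∈ Rsub K := by
      rwa [aCl, Submodule.Quotient.mk_eq_zero] at h
    have := Rsub_le_ker K hmem
    rw [LinearMap.mem_ker, TrF_iV, contractRight_apply] at this
    simp at this
  · intro x
    obtain ⟨y, rfl⟩ := Submodule.Quotient.mk_surjective (Rsub K) x
    obtain ⟨c, hc⟩ := Submodule.mem_span_singleton.1 (aCl_mem_span K y)
    exact ⟨c, hc.symm⟩
end
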